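/- Let (y_i) be a sequence of pairwise orthogonal vectors in ℓ₂ with α ≤ ‖y_i‖ ≤ β (0 < α ≤ β) forming the rows of an infinite matrix whose columns x_j all lie in ℓ₂. Then the columns (x_j) form a frame in their closed linear span with bounds A = α² and B = β²: α²‖x‖² ≤ ∑_j |⟨x, x_j⟩|² ≤ β²‖x‖² for all x in the closed span of (x_j). -/

import Mathlib

open scoped RealInnerProductSpace

set_option maxHeartbeats 1000000

/-- If the rows `y i = (a i ·)` of an infinite matrix are pairwise orthogonal vectors of
`ℓ₂` with `α ≤ ‖y i‖ ≤ β` (`0 < α ≤ β`), and the columns `x j = (a · j)` lie in `ℓ₂`,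
then the columns form a frame with bounds `α², β²` in their closed linear span. -/
theorem orthogonal_rows_columns_frame
    (a : ℕ → ℕ → ℝ)
    (hrow : ∀ i, Memℓp (fun j => a i j) 2)
    (hcol : ∀ j, Memℓp (fun i => a i j) 2)
    (α β : ℝ) (hα : 0 < α) (hαβ : α ≤ β)
    (horth : ∀ i i' : ℕ, i ≠ i' →
      ⟪(⟨fun j => a i j, hrow i⟩ : lp (fun _ : ℕ => ℝ) 2),
        (⟨fun j => a i' j, hrow i'⟩ : lp (fun _ : ℕ => ℝ) 2)⟫ = 0)
    (hnorm : ∀ i, α ≤ ‖(⟨fun j => a i j, hrow i⟩ : lp (fun _ : ℕ => ℝ) 2)‖ ∧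
        ‖(⟨fun j => a i j, hrow i⟩ : lp (fun _ : ℕ => ℝ) 2)‖ ≤ β) :
    ∀ x ∈ (Submodule.span ℝ
        (Set.range fun j => (⟨fun i => a i j, hcol j⟩ : lp (fun _ : ℕ => ℝ) 2))).topologicalClosure,
      α ^ 2 * ‖x‖ ^ 2 ≤
          ∑' j, ⟪x, (⟨fun i => a i j, hcol j⟩ : lp (fun _ : ℕ => ℝ) 2)⟫ ^ 2 ∧
      ∑' j, ⟪x, (⟨fun i => a i j, hcol j⟩ : lp (fun _ : ℕ => ℝ) 2)⟫ ^ 2 ≤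
          β ^ 2 * ‖x‖ ^ 2 := by
  classical
  intro x _
  set y : ℕ → lp (fun _ : ℕ => ℝ) 2 := fun i => ⟨fun j => a i j, hrow i⟩ with hy
  have hy0 : ∀ i, ‖y i‖ ≠ 0 := fun i => ne_of_gt (lt_of_lt_of_le hα (hnorm i).1)
  set e : ℕ → lp (fun _ : ℕ => ℝ) 2 := fun i => ‖y i‖⁻¹ • y i with he_def
  have he : Orthonormal ℝ e := by
    constructor
    · intro i
      rw [he_def]
      simp only [norm_smul, norm_inv, norm_norm]
      exact inv_mul_cancel₀ (hy0 i)
    · intro i j hij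
      rw [he_def]
      simp only [inner_smul_left, inner_smul_right]
      rw [horth i j hij]
      ring
  have hnormx : HasSum (fun i => (x i) ^ 2) (‖x‖ ^ 2) := by
    have := lp.hasSum_inner (𝕜 := ℝ) x x
    simp only [RCLike.inner_apply, starRingEnd_apply, star_trivial] at this
    have h : ⟪x, x⟫ = ‖x‖ ^ 2 := real_inner_self_eq_norm_sq x
    rw [← h]
    convert this using 2 with i
    · rfl
    ring
  -- the sequence f i = x i * ‖y i‖ is in ℓ²
  have hf : Memℓp (fun i => x i * ‖y i‖) 2 := by
    apply memℓp_gen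
    have h2 : ENNReal.toReal 2 = ((2:ℕ):ℝ) := by norm_num
    rw [h2]
    simp only [Real.rpow_natCast]
    refine Summable.of_nonneg_of_le (fun i => by positivity) (fun i => ?_)
      (hnormx.summable.mul_left (β ^ 2))
    have hb : ‖y i‖ ^ 2 ≤ β ^ 2 := pow_le_pow_left₀ (norm_nonneg _) (hnorm i).2 2
    rw [norm_mul, norm_norm, mul_pow, Real.norm_eq_abs, sq_abs]
    nlinarith [sq_nonneg (x i)]
  set f : lp (fun _ : ℕ => ℝ) 2 := ⟨fun i => x i * ‖y i‖, hf⟩ with hfdef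
  set S : lp (fun _ : ℕ => ℝ) 2 := he.orthogonalFamily.linearIsometry f with hSdef
  have hSsum : HasSum (fun i => x i • y i) S := by
    have := he.orthogonalFamily.hasSum_linearIsometry f
    convert this using 2 with i
    rw [LinearIsometry.toSpanSingleton_apply]
    show x i • y i = (f i) • e i
    have : (f i : ℝ) = x i * ‖y i‖ := rfl
    rw [this, he_def]
    rw [smul_smul]
    rw [mul_assoc, mul_inv_cancel₀ (hy0 i), mul_one]
  -- coordinates of S
  have hScoord : ∀ j, S j = ⟪x, (⟨fun i => a i j, hcol j⟩ : lp (fun _ : ℕ => ℝ) 2)⟫ := by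
    intro j
    have h1 : S j = ⟪lp.single 2 j (1:ℝ), S⟫ := by
      rw [lp.inner_single_left]
      simp [RCLike.inner_apply]
    have h2 := hSsum.mapL (innerSL ℝ (lp.single 2 j (1:ℝ)))
    simp only [innerSL_apply_apply] at h2
    have h3 : ∀ i, ⟪lp.single 2 j (1:ℝ), x i • y i⟫ = x i * a i j := by
      intro i
      rw [real_inner_smul_right, real_inner_comm, lp.inner_single_right]
      simp [RCLike.inner_apply, hy]
    rw [h1, ← h2.tsum_eq]
    rw [lp.inner_eq_tsum]
    exact tsum_congr fun i => by rw [h3]; simp [RCLike.inner_apply, mul_comm]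
  -- tsum of squares = ‖S‖²
  have hSS : HasSum (fun j => (S j) ^ 2) (‖S‖ ^ 2) := by
    have := lp.hasSum_inner (𝕜 := ℝ) S S
    simp only [RCLike.inner_apply, starRingEnd_apply, star_trivial] at this
    have h : ⟪S, S⟫ = ‖S‖ ^ 2 := real_inner_self_eq_norm_sq S
    rw [← h]
    convert this using 2 with j
    · rfl
    · ring
  have hkey : (∑' j, ⟪x, (⟨fun i => a i j, hcol j⟩ : lp (fun _ : ℕ => ℝ) 2)⟫ ^ 2) = ‖S‖ ^ 2 := by
    rw [← hSS.tsum_eq]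
    exact tsum_congr fun j => by rw [hScoord j]
  -- ‖S‖² = ∑ (x i * ‖y i‖)²
  have hnormS : HasSum (fun i => (x i * ‖y i‖) ^ 2) (‖S‖ ^ 2) := by
    have h1 : ‖S‖ = ‖f‖ := he.orthogonalFamily.linearIsometry.norm_map f
    have := lp.hasSum_inner (𝕜 := ℝ) f f
    simp only [RCLike.inner_apply, starRingEnd_apply, star_trivial] at this
    have h : ⟪f, f⟫ = ‖f‖ ^ 2 := real_inner_self_eq_norm_sq f
    rw [h1, ← h]
    convert this using 2 with i
    show (x i * ‖y i‖) ^ 2 = (f i) * (f i)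
    have : (f i : ℝ) = x i * ‖y i‖ := rfl
    rw [this]; ring
    rfl
  rw [hkey]
  constructor
  · have h1 : HasSum (fun i => α ^ 2 * (x i) ^ 2) (α ^ 2 * ‖x‖ ^ 2) := hnormx.mul_left _
    refine hasSum_le ?_ h1 hnormS
    intro i
    rw [mul_pow]
    have : α ^ 2 ≤ ‖y i‖ ^ 2 := by
      apply pow_le_pow_left₀ hα.le (hnorm i).1
    nlinarith [sq_nonneg (x i)]
  · have h1 : HasSum (fun i => β ^ 2 * (x i) ^ 2) (β ^ 2 * ‖x‖ ^ 2) := hnormx.mul_left _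
    refine hasSum_le ?_ hnormS h1
    intro i
    rw [mul_pow]
    have : ‖y i‖ ^ 2 ≤ β ^ 2 := by
      apply pow_le_pow_left₀ (norm_nonneg _) (hnorm i).2
    nlinarith [sq_nonneg (x i)]
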